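/- Let G be a finite group and N a normal subgroup of G such that for every n ∈ N the real conjugacy class of n in G intersected with N equals the real conjugacy class of n in N, i.e., (n)^±_G ∩ N = (n)^±_N. Let V be a finite-dimensional real representation of N and let K be any subgroup of G. Then |K| · dim_ℝ (Ind_N^G(V))^K = [G : N] · |K ∩ N| · dim_ℝ V^{K ∩ N}, where for a subgroup L the superscript L denotes the subspace of vectors fixed by every element of L. -/

import Mathlib

/-!
STATEMENT 12: Let `G` be a finite group and `N` a normal subgroup of `G` such that for
every `n ∈ N` the real conjugacy class of `n` in `G` intersected with `N` equals the real
conjugacy class of `n` in `N`, i.e. `(n)^±_G ∩ N = (n)^±_N`. Let `V` be a finite-dimensional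
real representation of `N` and let `K` be any subgroup of `G`. Then
`|K| · dim_ℝ (Ind_N^G(V))^K = [G : N] · |K ∩ N| · dim_ℝ V^{K ∩ N}`, where `(-)^L` denotes
the subspace of vectors fixed by every element of `L`.

The induced representation is realized concretely: `Ind_N^G(V)` is the space of functions
`f : G → V` with `f (n * x) = ρ n (f x)` for `n ∈ N`, on which `G` acts by right
translation. `K ∩ N`, viewed as a subgroup of `N`, is `K.subgroupOf N`. -/

variable {G : Type} [Group G]

/-- The carrier of the induced representation `Ind_H^G V`: the space of functions
`f : G → V` satisfying `f (h * x) = ρ h (f x)` for all `h ∈ H`, `x ∈ G`. -/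
def indCarrier (H : Subgroup G) {V : Type} [AddCommGroup V] [Module ℝ V]
    (ρ : Representation ℝ ↥H V) : Submodule ℝ (G → V) where
  carrier := {f | ∀ (h : ↥H) (x : G), f ((h : G) * x) = ρ h (f x)}
  add_mem' := by
    intro a b ha hb h x
    simp only [Pi.add_apply, ha h x, hb h x, map_add]
  zero_mem' := by
    intro h x
    simp
  smul_mem' := by
    intro c a ha h x
    simp only [Pi.smul_apply, ha h x, map_smul]

/-- The induced representation `Ind_H^G V` of a real representation `ρ` of `H ≤ G`:
`G` acts on `indCarrier H ρ` by right translation. -/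
noncomputable def indRep (H : Subgroup G) {V : Type} [AddCommGroup V] [Module ℝ V]
    (ρ : Representation ℝ ↥H V) : Representation ℝ G ↥(indCarrier H ρ) where
  toFun g := (LinearMap.funLeft ℝ V (fun x => x * g)).restrict
    (p := indCarrier H ρ) (q := indCarrier H ρ)
    (fun f hf h x => by
      simpa [LinearMap.funLeft_apply, mul_assoc] using hf h (x * g))
  map_one' := by
    apply LinearMap.ext
    intro f
    apply Subtype.ext
    funext x
    simp [LinearMap.restrict_apply, LinearMap.funLeft_apply]
  map_mul' g g' := by
    apply LinearMap.ext
    intro f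
    apply Subtype.ext
    funext x
    exact congrArg (f : G → V) (mul_assoc x g g').symm

/-- The submodule of vectors fixed by every element of a subgroup `K`. -/
def fixedSubmodule {V : Type} [AddCommGroup V] [Module ℝ V]
    (ρ : Representation ℝ G V) (K : Subgroup G) : Submodule ℝ V where
  carrier := {v | ∀ g ∈ K, ρ g v = v}
  add_mem' := by
    intro a b ha hb g hg
    simp [map_add, ha g hg, hb g hg]
  zero_mem' := by
    intro g hg
    simp
  smul_mem' := by
    intro c v hv g hg
    simp [map_smul, hv g hg]

/-- The real dimension of the subspace of `K`-fixed vectors. -/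
noncomputable def fixedDim {V : Type} [AddCommGroup V] [Module ℝ V]
    (ρ : Representation ℝ G V) (K : Subgroup G) : ℕ :=
  Module.finrank ℝ ↥(fixedSubmodule ρ K)

section AuxLemmas

open LinearMap

/-! ### Averaging: `|H| * dim W^H = ∑ tr (τ h)` -/

lemma avg_trace {H W : Type} [Group H] [AddCommGroup W] [Module ℝ W]
    [FiniteDimensional ℝ W] [Fintype H] (τ : Representation ℝ H W) :
    (Fintype.card H : ℝ) * (Module.finrank ℝ ↥τ.invariants : ℝ) =
      ∑ h : H, LinearMap.trace ℝ W (τ h) := by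
  have hc : (Fintype.card H : ℝ) ≠ 0 := by exact_mod_cast Fintype.card_ne_zero
  haveI : Invertible (Fintype.card H : ℝ) := invertibleOfNonzero hc
  have hp := (Representation.isProj_averageMap τ).trace
  have havg : τ.averageMap = ⅟(Fintype.card H : ℝ) • ∑ h : H, τ h := by
    simp only [Representation.averageMap, GroupAlgebra.average, map_smul, map_sum,
      MonoidAlgebra.of_apply, Representation.asAlgebraHom_single_one]
  have h2 : LinearMap.trace ℝ W τ.averageMap
      = ⅟(Fintype.card H : ℝ) * ∑ h : H, LinearMap.trace ℝ W (τ h) := by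
    rw [havg, map_smul, map_sum, smul_eq_mul]
  rw [← hp, h2, ← mul_assoc, mul_invOf_self, one_mul]

lemma fixedSubmodule_eq {H W : Type} [Group H] [AddCommGroup W] [Module ℝ W]
    (ρ : Representation ℝ H W) (L : Subgroup H) :
    fixedSubmodule ρ L = Representation.invariants (ρ.comp L.subtype) := by
  ext v
  exact ⟨fun h g => h ↑g g.2, fun h g hg => h ⟨g, hg⟩⟩

lemma card_mul_fixedDim {H W : Type} [Group H] [AddCommGroup W] [Module ℝ W]
    [FiniteDimensional ℝ W] (ρ : Representation ℝ H W) (L : Subgroup H) [Fintype ↥L] :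
    (Fintype.card ↥L : ℝ) * (fixedDim ρ L : ℝ) =
      ∑ l : ↥L, LinearMap.trace ℝ W (ρ ↑l) := by
  have h := avg_trace (ρ.comp L.subtype)
  rw [fixedDim, fixedSubmodule_eq]
  exact h

end AuxLemmas
section TwistedTrace

lemma trace_twisted {ι : Type} [Fintype ι] [DecidableEq ι] {V : Type} [AddCommGroup V]
    [Module ℝ V] [FiniteDimensional ℝ V] (σ : Equiv.Perm ι) (A : ι → (V →ₗ[ℝ] V)) :
    LinearMap.trace ℝ (ι → V) (LinearMap.pi (fun i => (A i) ∘ₗ LinearMap.proj (σ i))) =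
      ∑ i : ι, if σ i = i then LinearMap.trace ℝ V (A i) else 0 := by
  classical
  set b := Module.finBasis ℝ V with hb
  rw [LinearMap.trace_eq_matrix_trace ℝ (Pi.basis fun _ : ι => b)]
  rw [Matrix.trace, ← Finset.univ_sigma_univ, Finset.sum_sigma]
  refine Finset.sum_congr rfl fun i _ => ?_
  by_cases h : σ i = i
  · rw [if_pos h, LinearMap.trace_eq_matrix_trace ℝ b, Matrix.trace]
    refine Finset.sum_congr rfl fun k _ => ?_
    simp [Matrix.diag, LinearMap.toMatrix_apply, Pi.basis_apply, Pi.basis_repr,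
      LinearMap.pi_apply, h]
  · rw [if_neg h]
    refine Finset.sum_eq_zero fun k _ => ?_
    simp [Matrix.diag, LinearMap.toMatrix_apply, Pi.basis_apply, Pi.basis_repr,
      LinearMap.pi_apply, Pi.single_apply, h]

end TwistedTrace
section Induced

variable {G : Type} [Group G] (N : Subgroup G) [N.Normal]
variable {V : Type} [AddCommGroup V] [Module ℝ V]

lemma mem_of_mk_eq {x y : G} (h : (QuotientGroup.mk x : G ⧸ N) = QuotientGroup.mk y) :
    x * y⁻¹ ∈ N := by
  have h1 : x⁻¹ * y ∈ N := QuotientGroup.eq.mp h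
  have h2 : y⁻¹ * x ∈ N := by simpa using N.inv_mem h1
  have h3 := Subgroup.Normal.conj_mem ‹N.Normal› _ h2 x
  have h4 : x * (y⁻¹ * x) * x⁻¹ = x * y⁻¹ := by group
  rwa [h4] at h3

/-- The element `x * out(Nx)⁻¹` of `N`. -/
noncomputable def nElt (x : G) : ↥N :=
  ⟨x * ((QuotientGroup.mk x : G ⧸ N).out)⁻¹,
    mem_of_mk_eq N (QuotientGroup.out_eq' (QuotientGroup.mk x)).symm⟩

lemma nElt_mul (h : ↥N) (x : G) : nElt N ((h : G) * x) = h * nElt N x := by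
  have hq : (QuotientGroup.mk ((h : G) * x) : G ⧸ N) = QuotientGroup.mk x := by
    rw [QuotientGroup.mk_mul, (QuotientGroup.eq_one_iff _).mpr h.2, one_mul]
  apply Subtype.ext
  show (h : G) * x * ((QuotientGroup.mk ((h : G) * x) : G ⧸ N).out)⁻¹
      = (h : G) * (x * ((QuotientGroup.mk x : G ⧸ N).out)⁻¹)
  rw [hq, mul_assoc]

variable (ρ : Representation ℝ ↥N V)

/-- The isomorphism between the induced representation space and `G ⧸ N → V`. -/
noncomputable def eInd : ↥(indCarrier N ρ) ≃ₗ[ℝ] (G ⧸ N → V) where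
  toFun f := fun q => (f : G → V) q.out
  map_add' f g := rfl
  map_smul' c f := rfl
  invFun F := ⟨fun x => ρ (nElt N x) (F (QuotientGroup.mk x)), by
    intro h x
    have hq : (QuotientGroup.mk ((h : G) * x) : G ⧸ N) = QuotientGroup.mk x := by
      rw [QuotientGroup.mk_mul, (QuotientGroup.eq_one_iff _).mpr h.2, one_mul]
    show ρ (nElt N ((h : G) * x)) (F (QuotientGroup.mk ((h : G) * x)))
        = ρ h (ρ (nElt N x) (F (QuotientGroup.mk x)))
    rw [hq, nElt_mul, map_mul]
    rfl⟩
  left_inv f := by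
    apply Subtype.ext
    funext x
    have hf := f.2 (nElt N x) ((QuotientGroup.mk x : G ⧸ N).out)
    have hx : ((nElt N x : G)) * ((QuotientGroup.mk x : G ⧸ N).out) = x := by
      show x * ((QuotientGroup.mk x : G ⧸ N).out)⁻¹ * _ = x
      group
    rw [hx] at hf
    exact hf.symm
  right_inv F := by
    funext q
    show ρ (nElt N q.out) (F (QuotientGroup.mk q.out)) = F q
    have h1 : (QuotientGroup.mk q.out : G ⧸ N) = q := QuotientGroup.out_eq' q
    have h2 : nElt N q.out = 1 := by
      apply Subtype.ext
      show q.out * ((QuotientGroup.mk q.out : G ⧸ N).out)⁻¹ = 1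
      rw [h1, mul_inv_cancel]
    rw [h1, h2, map_one]
    rfl

/-- The twisting element appearing in the matrix of `indRep g` on `G ⧸ N → V`. -/
noncomputable def cElt (g : G) (q : G ⧸ N) : ↥N :=
  ⟨q.out * g * ((q * QuotientGroup.mk g : G ⧸ N).out)⁻¹, by
    apply mem_of_mk_eq N
    rw [QuotientGroup.mk_mul, QuotientGroup.out_eq', QuotientGroup.out_eq']⟩

lemma conj_indRep (g : G) :
    (eInd N ρ).conj ((indRep N ρ) g) =
      LinearMap.pi (fun q : G ⧸ N =>
        (ρ (cElt N g q)) ∘ₗ LinearMap.proj ((Equiv.mulRight (QuotientGroup.mk g : G ⧸ N)) q)) := by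
  apply LinearMap.ext
  intro F
  funext q
  rw [LinearEquiv.conj_apply]
  show eInd N ρ ((indRep N ρ) g ((eInd N ρ).symm F)) q = _
  have lhs1 : eInd N ρ ((indRep N ρ) g ((eInd N ρ).symm F)) q
      = (((eInd N ρ).symm F : G → V)) (q.out * g) := rfl
  rw [lhs1]
  have lhs2 : (((eInd N ρ).symm F : G → V)) (q.out * g)
      = ρ (nElt N (q.out * g)) (F (QuotientGroup.mk (q.out * g))) := rfl
  rw [lhs2]
  have hq : (QuotientGroup.mk (q.out * g) : G ⧸ N) = q * QuotientGroup.mk g := by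
    rw [QuotientGroup.mk_mul, QuotientGroup.out_eq']
  have hn : nElt N (q.out * g) = cElt N g q := by
    apply Subtype.ext
    show q.out * g * ((QuotientGroup.mk (q.out * g) : G ⧸ N).out)⁻¹ = _
    rw [hq]
    rfl
  rw [hq, hn]
  rfl

open Classical in
/-- `χ_G`: the character of `ρ` extended by zero to all of `G`. -/
noncomputable def chiG : G → ℝ := fun x =>
  if hx : x ∈ N then LinearMap.trace ℝ V (ρ ⟨x, hx⟩) else 0

lemma trace_indRep [Fintype G] [FiniteDimensional ℝ V] [Fintype (G ⧸ N)]
    [DecidableEq (G ⧸ N)] (g : G) :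
    LinearMap.trace ℝ ↥(indCarrier N ρ) ((indRep N ρ) g) =
      ∑ q : G ⧸ N, chiG N ρ (q.out * g * q.out⁻¹) := by
  haveI : FiniteDimensional ℝ ↥(indCarrier N ρ) := inferInstance
  rw [← LinearMap.trace_conj' ((indRep N ρ) g) (eInd N ρ), conj_indRep, trace_twisted]
  refine Finset.sum_congr rfl fun q _ => ?_
  by_cases hg : g ∈ N
  · have h1 : (QuotientGroup.mk g : G ⧸ N) = 1 := (QuotientGroup.eq_one_iff _).mpr hg
    have hfix : (Equiv.mulRight (QuotientGroup.mk g : G ⧸ N)) q = q := by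
      simp [h1]
    rw [if_pos hfix]
    have hmem : q.out * g * q.out⁻¹ ∈ N := Subgroup.Normal.conj_mem ‹N.Normal› g hg q.out
    rw [chiG, dif_pos hmem]
    congr 1
    apply congrArg
    apply Subtype.ext
    show q.out * g * ((q * QuotientGroup.mk g : G ⧸ N).out)⁻¹ = q.out * g * q.out⁻¹
    rw [h1, mul_one]
  · have hfix : ¬ (Equiv.mulRight (QuotientGroup.mk g : G ⧸ N)) q = q := by
      simp only [Equiv.coe_mulRight]
      intro h
      have : (QuotientGroup.mk g : G ⧸ N) = 1 := by
        have := mul_left_cancel (a := q) (b := QuotientGroup.mk g) (c := 1) (by simpa using h)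
        exact this
      exact hg ((QuotientGroup.eq_one_iff _).mp this)
    rw [if_neg hfix]
    have hmem : ¬ (q.out * g * q.out⁻¹ ∈ N) := by
      intro h
      apply hg
      have := Subgroup.Normal.conj_mem ‹N.Normal› _ h q.out⁻¹
      simpa [mul_assoc] using this
    rw [chiG, dif_neg hmem]

end Induced
section Pairing

variable {G : Type} [Group G] (N : Subgroup G) [N.Normal]
variable {V : Type} [AddCommGroup V] [Module ℝ V]
variable (ρ : Representation ℝ ↥N V)

omit [N.Normal] in
lemma trace_conj_elem (a u : ↥N) :
    LinearMap.trace ℝ V (ρ (u * a * u⁻¹)) = LinearMap.trace ℝ V (ρ a) := by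
  rw [map_mul, LinearMap.trace_mul_comm, ← map_mul, inv_mul_cancel_left]

lemma chiG_pair
    (hreal : ∀ n x : ↥N,
      (IsConj (n : G) (x : G) ∨ IsConj ((n : G))⁻¹ (x : G)) ↔ (IsConj n x ∨ IsConj n⁻¹ x))
    (x g : G) :
    chiG N ρ (x * g * x⁻¹) + chiG N ρ (x * g⁻¹ * x⁻¹) = chiG N ρ g + chiG N ρ g⁻¹ := by
  by_cases hg : g ∈ N
  · have hc : x * g * x⁻¹ ∈ N := ‹N.Normal›.conj_mem g hg x
    have hgi : g⁻¹ ∈ N := N.inv_mem hg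
    have hci : x * g⁻¹ * x⁻¹ ∈ N := ‹N.Normal›.conj_mem g⁻¹ hgi x
    set n : ↥N := ⟨g, hg⟩ with hn
    set c : ↥N := ⟨x * g * x⁻¹, hc⟩ with hcdef
    have h1 : chiG N ρ (x * g * x⁻¹) = LinearMap.trace ℝ V (ρ c) := dif_pos hc
    have h2 : chiG N ρ (x * g⁻¹ * x⁻¹) = LinearMap.trace ℝ V (ρ c⁻¹) := by
      rw [chiG, dif_pos hci]
      congr 1
      apply congrArg
      apply Subtype.ext
      show x * g⁻¹ * x⁻¹ = (x * g * x⁻¹)⁻¹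
      group
    have h3 : chiG N ρ g = LinearMap.trace ℝ V (ρ n) := dif_pos hg
    have h4 : chiG N ρ g⁻¹ = LinearMap.trace ℝ V (ρ n⁻¹) := by
      rw [chiG, dif_pos hgi]
      congr 1
    rw [h1, h2, h3, h4]
    have hGconj : IsConj (n : G) (c : G) := isConj_iff.mpr ⟨x, rfl⟩
    rcases (hreal n c).mp (Or.inl hGconj) with h | h
    · obtain ⟨u, hu⟩ := isConj_iff.mp h
      have e1 : LinearMap.trace ℝ V (ρ c) = LinearMap.trace ℝ V (ρ n) := by
        rw [← hu, trace_conj_elem]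
      have e2 : LinearMap.trace ℝ V (ρ c⁻¹) = LinearMap.trace ℝ V (ρ n⁻¹) := by
        have hcc : c⁻¹ = u * n⁻¹ * u⁻¹ := by rw [← hu]; group
        rw [hcc, trace_conj_elem]
      rw [e1, e2]
    · obtain ⟨u, hu⟩ := isConj_iff.mp h
      have e1 : LinearMap.trace ℝ V (ρ c) = LinearMap.trace ℝ V (ρ n⁻¹) := by
        rw [← hu, trace_conj_elem]
      have e2 : LinearMap.trace ℝ V (ρ c⁻¹) = LinearMap.trace ℝ V (ρ n) := by
        have hcc : c⁻¹ = u * n * u⁻¹ := by rw [← hu]; group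
        rw [hcc, trace_conj_elem]
      rw [e1, e2, add_comm]
  · have h1 : ¬(x * g * x⁻¹ ∈ N) := by
      intro h
      apply hg
      have := ‹N.Normal›.conj_mem _ h x⁻¹
      simpa [mul_assoc] using this
    have hgi : ¬(g⁻¹ ∈ N) := fun h => hg (by simpa using N.inv_mem h)
    have h2 : ¬(x * g⁻¹ * x⁻¹ ∈ N) := by
      intro h
      apply hgi
      have := ‹N.Normal›.conj_mem _ h x⁻¹
      simpa [mul_assoc] using this
    rw [chiG, chiG, chiG, chiG, dif_neg h1, dif_neg h2, dif_neg hg, dif_neg hgi]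

lemma sum_conj_chiG
    (hreal : ∀ n x : ↥N,
      (IsConj (n : G) (x : G) ∨ IsConj ((n : G))⁻¹ (x : G)) ↔ (IsConj n x ∨ IsConj n⁻¹ x))
    (K : Subgroup G) [Fintype ↥K] (x : G) :
    ∑ k : ↥K, chiG N ρ (x * ↑k * x⁻¹) = ∑ k : ↥K, chiG N ρ ↑k := by
  have hinv : ∀ f : G → ℝ, (∑ k : ↥K, f ↑(k⁻¹)) = ∑ k : ↥K, f ↑k := by
    intro f
    exact Fintype.sum_equiv (Equiv.inv ↥K) _ _ (fun k => rfl)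
  have hs : ∑ k : ↥K, (chiG N ρ (x * ↑k * x⁻¹) + chiG N ρ (x * (↑k)⁻¹ * x⁻¹))
      = ∑ k : ↥K, (chiG N ρ ↑k + chiG N ρ (↑k)⁻¹) :=
    Finset.sum_congr rfl fun k _ => chiG_pair N ρ hreal x ↑k
  rw [Finset.sum_add_distrib, Finset.sum_add_distrib] at hs
  have e1 : (∑ k : ↥K, chiG N ρ (x * (↑k)⁻¹ * x⁻¹)) = ∑ k : ↥K, chiG N ρ (x * ↑k * x⁻¹) :=
    hinv (fun g => chiG N ρ (x * g * x⁻¹))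
  have e2 : (∑ k : ↥K, chiG N ρ ((↑k)⁻¹)) = ∑ k : ↥K, chiG N ρ ↑k :=
    hinv (fun g => chiG N ρ g)
  rw [e1, e2] at hs
  linarith

/-- The equivalence between `{k : K // ↑k ∈ N}` and `K.subgroupOf N`. -/
def subEquiv (K : Subgroup G) : {k : ↥K // (k : G) ∈ N} ≃ ↥(K.subgroupOf N) where
  toFun p := ⟨⟨(p.1 : G), p.2⟩, Subgroup.mem_subgroupOf.mpr p.1.2⟩
  invFun m := ⟨⟨((m : ↥N) : G), Subgroup.mem_subgroupOf.mp m.2⟩, (m : ↥N).2⟩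
  left_inv p := Subtype.ext (Subtype.ext rfl)
  right_inv m := Subtype.ext (Subtype.ext rfl)

lemma sum_chiG_K (K : Subgroup G) [Fintype ↥K] [Fintype ↥(K.subgroupOf N)] :
    ∑ k : ↥K, chiG N ρ ↑k = ∑ m : ↥(K.subgroupOf N), LinearMap.trace ℝ V (ρ ↑m) := by
  classical
  rw [← Finset.sum_filter_add_sum_filter_not Finset.univ (fun k : ↥K => (k : G) ∈ N)
    (fun k => chiG N ρ ↑k)]
  have hz : (∑ x ∈ Finset.filter (fun k : ↥K => ¬((k : G) ∈ N)) Finset.univ,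
      chiG N ρ ↑x) = 0 :=
    Finset.sum_eq_zero fun k hk => by
      rw [chiG, dif_neg (Finset.mem_filter.mp hk).2]
  rw [hz, add_zero]
  rw [Finset.sum_subtype (p := fun k : ↥K => (k : G) ∈ N)
    (Finset.filter (fun k : ↥K => (k : G) ∈ N) Finset.univ)
    (by intro x; simp) (fun k : ↥K => chiG N ρ ↑k)]
  refine Fintype.sum_equiv (subEquiv N K) _ _ fun p => ?_
  show chiG N ρ ↑(p.1) = _
  rw [chiG, dif_pos p.2]
  rfl

end Pairing

theorem statement12 {G : Type} [Group G] [Fintype G] (N : Subgroup G) [N.Normal]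
    (hreal : ∀ n x : ↥N,
      (IsConj (n : G) (x : G) ∨ IsConj ((n : G))⁻¹ (x : G)) ↔ (IsConj n x ∨ IsConj n⁻¹ x))
    {V : Type} [AddCommGroup V] [Module ℝ V] [FiniteDimensional ℝ V]
    (ρ : Representation ℝ ↥N V) (K : Subgroup G) :
    Nat.card ↥K * fixedDim (indRep N ρ) K =
      N.index * (Nat.card ↥(K.subgroupOf N) * fixedDim ρ (K.subgroupOf N)) := by
    classical
  haveI : Fintype (G ⧸ N) := Fintype.ofFinite _
  have main : (Nat.card ↥K : ℝ) * (fixedDim (indRep N ρ) K : ℝ) =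
      (N.index : ℝ) * ((Nat.card ↥(K.subgroupOf N) : ℝ) *
        (fixedDim ρ (K.subgroupOf N) : ℝ)) := by
    rw [Nat.card_eq_fintype_card, Nat.card_eq_fintype_card,
      card_mul_fixedDim (indRep N ρ) K, card_mul_fixedDim ρ (K.subgroupOf N)]
    calc ∑ k : ↥K, LinearMap.trace ℝ ↥(indCarrier N ρ) ((indRep N ρ) ↑k)
        = ∑ k : ↥K, ∑ q : G ⧸ N, chiG N ρ (q.out * ↑k * q.out⁻¹) :=
          Finset.sum_congr rfl fun k _ => trace_indRep N ρ ↑k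
      _ = ∑ q : G ⧸ N, ∑ k : ↥K, chiG N ρ (q.out * ↑k * q.out⁻¹) := Finset.sum_comm
      _ = ∑ q : G ⧸ N, ∑ k : ↥K, chiG N ρ ↑k :=
          Finset.sum_congr rfl fun q _ => sum_conj_chiG N ρ hreal K q.out
      _ = ∑ _q : G ⧸ N, ∑ m : ↥(K.subgroupOf N), LinearMap.trace ℝ V (ρ ↑m) :=
          Finset.sum_congr rfl fun q _ => sum_chiG_K N ρ K
      _ = (Fintype.card (G ⧸ N) : ℝ) * ∑ m : ↥(K.subgroupOf N), LinearMap.trace ℝ V (ρ ↑m) := by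
          rw [Finset.sum_const, Finset.card_univ, nsmul_eq_mul]
      _ = (N.index : ℝ) * ∑ m : ↥(K.subgroupOf N), LinearMap.trace ℝ V (ρ ↑m) := by
          rw [Subgroup.index_eq_card, Nat.card_eq_fintype_card]
  exact_mod_cast main
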